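/- arXiv:1306.2291 — 2 statements merged into one kernel-verified Lean document; each statement's English description precedes it below -/
import Mathlib

section
/- For every set S of ω-sharing groups and every idempotent substitution θ, the sequential abstract unification and the parallel abstract unification coincide: mgu_ω(S,θ) = mgu_p(S,θ). -/
open Classical

/-- First-order terms over a signature `Sig` with arity function `ar`,
    with variables drawn from `ℕ` (a countably infinite set). -/
inductive FTerm (Sig : Type) (ar : Sig → ℕ) : Type where
  | var : ℕ → FTerm Sig ar
  | app : (f : Sig) → (Fin (ar f) → FTerm Sig ar) → FTerm Sig ar

variable {Sig : Type} {ar : Sig → ℕ}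

namespace FTerm

/-- Number of occurrences of the variable `v` in a term. -/
def occ (v : ℕ) : FTerm Sig ar → ℕ
  | var w => if w = v then 1 else 0
  | app _ ts => ∑ i, occ v (ts i)

/-- Application of a substitution (a total map from variables to terms) to a term. -/
def subst (δ : ℕ → FTerm Sig ar) : FTerm Sig ar → FTerm Sig ar
  | var v => δ v
  | app f ts => app f (fun i => (ts i).subst δ)

end FTerm

/-- Domain of a substitution. -/
def domS (θ : ℕ → FTerm Sig ar) : Set ℕ := {x | θ x ≠ FTerm.var x}

/-- Set of variables occurring in a term. -/
def varsT (t : FTerm Sig ar) : Set ℕ := {v | FTerm.occ v t ≠ 0}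

/-- Range of a substitution. -/
def rngS (θ : ℕ → FTerm Sig ar) : Set ℕ := ⋃ x ∈ domS θ, varsT (θ x)

/-- Variables of a substitution. -/
def varsS (θ : ℕ → FTerm Sig ar) : Set ℕ := domS θ ∪ rngS θ

/-- A substitution is idempotent iff its domain and range are disjoint. -/
def Idem (θ : ℕ → FTerm Sig ar) : Prop := domS θ ∩ rngS θ = ∅

/-- Multiplicity `χ(B,t)` of an ω-sharing group `B` in a term `t`. -/
def chi (B : ℕ →₀ ℕ) (t : FTerm Sig ar) : ℕ := ∑ v ∈ B.support, B v * FTerm.occ v t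

/-- A parallel sharing graph for a set `S` of ω-sharing groups and an
    (idempotent) substitution `θ`.  The layers are indexed by the variables in
    the domain of `θ` (the function `layer` assigns to each edge its layer, so
    the edge sets of different layers are automatically pairwise disjoint). -/
structure PSG (Sig : Type) (ar : Sig → ℕ) (S : Set (ℕ →₀ ℕ)) (θ : ℕ → FTerm Sig ar) where
  N : Type
  fintypeN : Fintype N
  nonemptyN : Nonempty N
  E : Type
  fintypeE : Fintype E
  layer : E → ℕ
  src : E → N
  tgt : E → N
  label : N → (ℕ →₀ ℕ)
  label_mem : ∀ n, label n ∈ S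
  layer_mem : ∀ e, layer e ∈ domS θ
  out_deg : ∀ (n : N), ∀ x ∈ domS θ,
    Nat.card {e : E // layer e = x ∧ src e = n} = chi (label n) (FTerm.var x : FTerm Sig ar)
  in_deg : ∀ (n : N), ∀ x ∈ domS θ,
    Nat.card {e : E // layer e = x ∧ tgt e = n} = chi (label n) (θ x)
  conn : ∀ a b : N, Relation.ReflTransGen
    (fun a b => ∃ e : E, (src e = a ∧ tgt e = b) ∨ (src e = b ∧ tgt e = a)) a b

attribute [instance] PSG.fintypeN PSG.fintypeE PSG.nonemptyN

/-- The resultant ω-sharing group of a parallel sharing graph. -/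
noncomputable def PSG.res {S : Set (ℕ →₀ ℕ)} {θ : ℕ → FTerm Sig ar}
    (G : PSG Sig ar S θ) : ℕ →₀ ℕ := ∑ n : G.N, G.label n

/-- Parallel abstract unification. -/
def mguP (S : Set (ℕ →₀ ℕ)) (θ : ℕ → FTerm Sig ar) : Set (ℕ →₀ ℕ) :=
  { B | ∃ G : PSG Sig ar S θ, G.res = B }

/-- The single-binding substitution `{x/t}`. -/
def sbind (x : ℕ) (t : FTerm Sig ar) : ℕ → FTerm Sig ar :=
  fun v => if v = x then t else FTerm.var v

/-- The substitution determined by a list of bindings `[(x₁,t₁),…,(x_p,t_p)]`. -/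
def toSubst : List (ℕ × FTerm Sig ar) → ℕ → FTerm Sig ar
  | [], v => FTerm.var v
  | (x, t) :: l, v => if v = x then t else toSubst l v

/-- Sequential abstract unification: `mgu_ω(S,ε) = S` and
    `mgu_ω(S, {x/t} ∪ θ) = mgu_ω(mgu_p(S,{x/t}), θ)`. -/
def mguSeq (S : Set (ℕ →₀ ℕ)) : List (ℕ × FTerm Sig ar) → Set (ℕ →₀ ℕ)
  | [] => S
  | (x, t) :: l => mguSeq (mguP S (sbind x t)) l

---- helpers ----
open Relation FTerm

lemma chi_eq_finsupp_sum (B : ℕ →₀ ℕ) (t : FTerm Sig ar) :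
    chi B t = B.sum (fun v k => k * FTerm.occ v t) := rfl

lemma chi_add (B₁ B₂ : ℕ →₀ ℕ) (t : FTerm Sig ar) :
    chi (B₁ + B₂) t = chi B₁ t + chi B₂ t := by
  simp only [chi_eq_finsupp_sum]
  exact Finsupp.sum_add_index' (fun _ => zero_mul _) (fun _ k₁ k₂ => add_mul k₁ k₂ _)

/-- `chi · t` as an additive monoid hom. -/
noncomputable def chiHom (t : FTerm Sig ar) : (ℕ →₀ ℕ) →+ ℕ where
  toFun B := chi B t
  map_zero' := by simp [chi]
  map_add' B₁ B₂ := chi_add B₁ B₂ t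

lemma chi_sum {ι : Type*} (s : Finset ι) (f : ι → (ℕ →₀ ℕ)) (t : FTerm Sig ar) :
    chi (∑ i ∈ s, f i) t = ∑ i ∈ s, chi (f i) t :=
  map_sum (chiHom t) f s

lemma natCard_sigma {ι : Type*} [Fintype ι] (f : ι → Type*) [∀ i, Finite (f i)] :
    Nat.card (Σ i, f i) = ∑ i, Nat.card (f i) := by
  classical
  have : ∀ i, Fintype (f i) := fun i => Fintype.ofFinite _
  simp only [Nat.card_eq_fintype_card, Fintype.card_sigma]

lemma rtg_map {α β : Type*} {r : α → α → Prop} {s : β → β → Prop} (f : α → β)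
    (h : ∀ a b, r a b → ReflTransGen s (f a) (f b)) :
    ∀ a b, ReflTransGen r a b → ReflTransGen s (f a) (f b) := by
  intro a b hab
  induction hab with
  | refl => exact .refl
  | tail _ hstep ih => exact ih.trans (h _ _ hstep)

lemma toSubst_of_not_mem {l : List (ℕ × FTerm Sig ar)} {x : ℕ}
    (h : x ∉ l.map Prod.fst) : toSubst l x = FTerm.var x := by
  induction l with
  | nil => rfl
  | cons p l ih =>
    obtain ⟨y, s⟩ := p
    simp only [List.map_cons, List.mem_cons] at h
    push_neg at h
    simp only [toSubst, if_neg h.1]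
    exact ih h.2

/-- fiber of the first projection of a sigma type -/
def sigmaFstFiber {ι : Type*} (f : ι → Type*) (u : ι) :
    {w : Σ i, f i // w.1 = u} ≃ f u where
  toFun w := w.2 ▸ w.1.2
  invFun a := ⟨⟨u, a⟩, rfl⟩
  left_inv := by rintro ⟨⟨i, a⟩, h⟩; subst h; rfl
  right_inv a := rfl

lemma rtg_eq_of_bot {α : Type*} {r : α → α → Prop} (hr : ∀ a b, ¬ r a b) {a b : α}
    (h : ReflTransGen r a b) : a = b := by
  induction h with
  | refl => rfl
  | tail _ hstep ih => exact absurd hstep (hr _ _)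

lemma mguP_empty (S : Set (ℕ →₀ ℕ)) {θ : ℕ → FTerm Sig ar} (hθ : ∀ v, θ v = FTerm.var v) :
    mguP S θ = S := by
  have hdom : domS θ = ∅ := by
    ext v; simp [domS, hθ]
  ext B
  constructor
  · rintro ⟨G, rfl⟩
    have hE : IsEmpty G.E := by
      constructor; intro e
      have := G.layer_mem e
      rw [hdom] at this
      exact this
    obtain ⟨n₀⟩ := G.nonemptyN
    have hall : ∀ n : G.N, n = n₀ := by
      intro n
      exact rtg_eq_of_bot (fun a b h => by obtain ⟨e, _⟩ := h; exact hE.elim e) (G.conn n n₀)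
    have hcard : (Finset.univ : Finset G.N) = {n₀} := by
      ext n; simp [hall n]
    have : G.res = G.label n₀ := by
      rw [PSG.res, hcard, Finset.sum_singleton]
    rw [this]
    exact G.label_mem n₀
  · intro hB
    refine ⟨{
      N := PUnit
      fintypeN := inferInstance
      nonemptyN := ⟨PUnit.unit⟩
      E := PEmpty
      fintypeE := inferInstance
      layer := PEmpty.elim
      src := PEmpty.elim
      tgt := PEmpty.elim
      label := fun _ => B
      label_mem := fun _ => hB
      layer_mem := fun e => e.elim
      out_deg := fun n y hy => by rw [hdom] at hy; exact hy.elim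
      in_deg := fun n y hy => by rw [hdom] at hy; exact hy.elim
      conn := fun a b => by cases a; cases b; exact .refl }, ?_⟩
    simp [PSG.res]

section Split
variable {S : Set (ℕ →₀ ℕ)} {θ σ₂ : ℕ → FTerm Sig ar} {x : ℕ} {t : FTerm Sig ar}

/-- Hypotheses for splitting off the binding `x/t` from `θ`, leaving `σ₂`. -/
structure SplitHyp (θ σ₂ : ℕ → FTerm Sig ar) (x : ℕ) (t : FTerm Sig ar) : Prop where
  hθx : θ x = t
  hθv : ∀ v, v ≠ x → θ v = σ₂ v
  hσx : σ₂ x = FTerm.var x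
  ht : t ≠ FTerm.var x

namespace SplitHyp

lemma hxθ (h : SplitHyp θ σ₂ x t) : x ∈ domS θ := by rw [domS, Set.mem_setOf_eq, h.hθx]; exact h.ht
lemma hxσ (h : SplitHyp θ σ₂ x t) : x ∉ domS σ₂ := by rw [domS, Set.mem_setOf_eq, h.hσx]; simp
lemma hne_of_memσ (h : SplitHyp θ σ₂ x t) {v : ℕ} (hv : v ∈ domS σ₂) : v ≠ x := fun e => h.hxσ (e ▸ hv)
lemma memθ_of_memσ (h : SplitHyp θ σ₂ x t) {v : ℕ} (hv : v ∈ domS σ₂) : v ∈ domS θ := by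
  rw [domS, Set.mem_setOf_eq, h.hθv v (h.hne_of_memσ hv)]; exact hv
lemma memσ_of_memθ (h : SplitHyp θ σ₂ x t) {v : ℕ} (hv : v ∈ domS θ) (hvx : v ≠ x) : v ∈ domS σ₂ := by
  rw [domS, Set.mem_setOf_eq, ← h.hθv v hvx]; exact hv
lemma dom_sbind (h : SplitHyp θ σ₂ x t) (v : ℕ) : v ∈ domS (sbind x t) ↔ v = x := by
  rw [domS, Set.mem_setOf_eq, sbind]
  constructor
  · intro hv; by_contra hvx; simp [hvx] at hv
  · intro hv; subst hv; simpa using h.ht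
lemma sbind_x (h : SplitHyp θ σ₂ x t) : sbind x t x = t := by simp [sbind]
lemma x_mem_dom_sbind (h : SplitHyp θ σ₂ x t) : x ∈ domS (sbind x t) := (h.dom_sbind x).mpr rfl

end SplitHyp

variable (G : PSG Sig ar S θ)

/-- two nodes are related when they are joined by a layer-`x` edge. -/
def cRel (x : ℕ) : G.N → G.N → Prop := fun a b =>
  ∃ e, G.layer e = x ∧ ((G.src e = a ∧ G.tgt e = b) ∨ (G.src e = b ∧ G.tgt e = a))

def cSetoid (x : ℕ) : Setoid G.N :=
  ⟨Relation.ReflTransGen (cRel G x),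
   fun _ => .refl,
   fun hab => haveI : Std.Symm (cRel G x) :=
      ⟨fun a b ⟨e, hl, hor⟩ => ⟨e, hl, hor.symm⟩⟩; Std.Symm.symm _ _ hab,
   fun hab hbc => hab.trans hbc⟩

lemma cEdge {e : G.E} (he : G.layer e = x) :
    (Quotient.mk (cSetoid G x) (G.src e)) = Quotient.mk (cSetoid G x) (G.tgt e) :=
  Quotient.sound (Relation.ReflTransGen.single ⟨e, he, Or.inl ⟨rfl, rfl⟩⟩)

variable (h : SplitHyp θ σ₂ x t)

/-- the connected component (w.r.t. layer-`x` edges) of a graph, as a sharing graph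
for the single binding `x/t`. -/
noncomputable def innerPSG (q : Quotient (cSetoid G x)) : PSG Sig ar S (sbind x t) where
  N := {n : G.N // Quotient.mk (cSetoid G x) n = q}
  fintypeN := inferInstance
  nonemptyN := by obtain ⟨n, hn⟩ := Quotient.exists_rep q; exact ⟨⟨n, hn⟩⟩
  E := {e : G.E // G.layer e = x ∧ Quotient.mk (cSetoid G x) (G.src e) = q}
  fintypeE := inferInstance
  layer := fun _ => x
  src := fun e => ⟨G.src e.1, e.2.2⟩
  tgt := fun e => ⟨G.tgt e.1, by rw [← cEdge G e.2.1]; exact e.2.2⟩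
  label := fun n => G.label n.1
  label_mem := fun n => G.label_mem n.1
  layer_mem := fun _ => h.x_mem_dom_sbind
  out_deg := by
    intro n y hy
    have hyx : y = x := (h.dom_sbind y).mp hy
    subst hyx
    rw [← G.out_deg n.1 y h.hxθ]
    apply Nat.card_congr
    exact {
      toFun := fun e' => ⟨e'.1.1, e'.1.2.1, congrArg Subtype.val e'.2.2⟩
      invFun := fun e => ⟨⟨e.1, e.2.1, by rw [e.2.2]; exact n.2⟩, rfl, Subtype.ext e.2.2⟩
      left_inv := fun e' => Subtype.ext (Subtype.ext rfl)
      right_inv := fun e => Subtype.ext rfl }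
  in_deg := by
    intro n y hy
    have hyx : y = x := (h.dom_sbind y).mp hy
    subst hyx
    rw [h.sbind_x, ← h.hθx, ← G.in_deg n.1 y h.hxθ]
    apply Nat.card_congr
    exact {
      toFun := fun e' => ⟨e'.1.1, e'.1.2.1, congrArg Subtype.val e'.2.2⟩
      invFun := fun e => ⟨⟨e.1, e.2.1, by
          rw [cEdge G e.2.1, e.2.2]; exact n.2⟩, rfl, Subtype.ext e.2.2⟩
      left_inv := fun e' => Subtype.ext (Subtype.ext rfl)
      right_inv := fun e => Subtype.ext rfl }
  conn := by
    intro a b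
    have hab : Relation.ReflTransGen (cRel G x) a.1 b.1 :=
      Quotient.exact (a.2.trans b.2.symm)
    have claim : ∀ (c : G.N), Relation.ReflTransGen (cRel G x) a.1 c →
        ∀ (hc : Quotient.mk (cSetoid G x) c = q),
        Relation.ReflTransGen
          (fun a' b' => ∃ e : {e : G.E // G.layer e = x ∧
              Quotient.mk (cSetoid G x) (G.src e) = q},
            ((⟨G.src e.1, e.2.2⟩ : {n // Quotient.mk (cSetoid G x) n = q}) = a' ∧
              (⟨G.tgt e.1, by rw [← cEdge G e.2.1]; exact e.2.2⟩ :
                {n // Quotient.mk (cSetoid G x) n = q}) = b') ∨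
            ((⟨G.src e.1, e.2.2⟩ : {n // Quotient.mk (cSetoid G x) n = q}) = b' ∧
              (⟨G.tgt e.1, by rw [← cEdge G e.2.1]; exact e.2.2⟩ :
                {n // Quotient.mk (cSetoid G x) n = q}) = a'))
          a ⟨c, hc⟩ := by
      intro c hc
      induction hc with
      | refl =>
        intro hc
        have : (⟨a.1, hc⟩ : {n // Quotient.mk (cSetoid G x) n = q}) = a :=
          Subtype.ext rfl
        rw [this]
      | @tail c' c _ hstep ih =>
        intro hc
        obtain ⟨e, hl, hor⟩ := hstep
        have hc' : Quotient.mk (cSetoid G x) c' = q :=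
          (Quotient.sound (Relation.ReflTransGen.single ⟨e, hl, hor⟩)).trans hc
        refine (ih hc').tail ?_
        cases hor with
        | inl h2 =>
          exact ⟨⟨e, hl, by rw [h2.1]; exact hc'⟩,
            Or.inl ⟨Subtype.ext h2.1, Subtype.ext h2.2⟩⟩
        | inr h2 =>
          exact ⟨⟨e, hl, by rw [h2.1]; exact hc⟩,
            Or.inr ⟨Subtype.ext h2.1, Subtype.ext h2.2⟩⟩
    have := claim b.1 hab b.2
    have hb : (⟨b.1, b.2⟩ : {n // Quotient.mk (cSetoid G x) n = q}) = b :=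
      Subtype.ext rfl
    rwa [hb] at this


lemma res_innerPSG (q : Quotient (cSetoid G x)) :
    (innerPSG G h q).res = ∑ n : {n : G.N // Quotient.mk (cSetoid G x) n = q}, G.label n.1 := by
  rw [PSG.res]
  congr 1

/-- the quotient graph by layer-`x` components, as a sharing graph for `σ₂`
over the sharing groups produced by the single binding `x/t`. -/
noncomputable def outerPSG : PSG Sig ar (mguP S (sbind x t)) σ₂ where
  N := Quotient (cSetoid G x)
  fintypeN := inferInstance
  nonemptyN := ⟨Quotient.mk _ (Classical.arbitrary G.N)⟩
  E := {e : G.E // G.layer e ≠ x}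
  fintypeE := inferInstance
  layer := fun e => G.layer e.1
  src := fun e => Quotient.mk _ (G.src e.1)
  tgt := fun e => Quotient.mk _ (G.tgt e.1)
  label := fun q => ∑ n : {n : G.N // Quotient.mk (cSetoid G x) n = q}, G.label n.1
  label_mem := fun q => ⟨innerPSG G h q, res_innerPSG G h q⟩
  layer_mem := fun e => h.memσ_of_memθ (G.layer_mem e.1) e.2
  out_deg := by
    intro q y hy
    have hyx : y ≠ x := h.hne_of_memσ hy
    have hyθ : y ∈ domS θ := h.memθ_of_memσ hy
    rw [chi_sum]
    have hdeg : ∀ n : {n : G.N // Quotient.mk (cSetoid G x) n = q},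
        chi (G.label n.1) (FTerm.var y : FTerm Sig ar) =
          Nat.card {e : G.E // G.layer e = y ∧ G.src e = n.1} :=
      fun n => (G.out_deg n.1 y hyθ).symm
    rw [Finset.sum_congr rfl (fun n _ => hdeg n), ← natCard_sigma]
    apply Nat.card_congr
    exact {
      toFun := fun e' => ⟨⟨G.src e'.1.1, e'.2.2⟩, ⟨e'.1.1, e'.2.1, rfl⟩⟩
      invFun := fun z => ⟨⟨z.2.1, fun hx' => hyx (z.2.2.1.symm.trans hx')⟩,
        z.2.2.1, (congrArg (Quotient.mk (cSetoid G x)) z.2.2.2).trans z.1.2⟩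
      left_inv := fun e' => Subtype.ext rfl
      right_inv := by
        rintro ⟨⟨n, hn⟩, ⟨e, he, hs⟩⟩
        obtain rfl : G.src e = n := hs
        rfl }
  in_deg := by
    intro q y hy
    have hyx : y ≠ x := h.hne_of_memσ hy
    have hyθ : y ∈ domS θ := h.memθ_of_memσ hy
    rw [← h.hθv y hyx, chi_sum]
    have hdeg : ∀ n : {n : G.N // Quotient.mk (cSetoid G x) n = q},
        chi (G.label n.1) (θ y) =
          Nat.card {e : G.E // G.layer e = y ∧ G.tgt e = n.1} :=
      fun n => (G.in_deg n.1 y hyθ).symm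
    rw [Finset.sum_congr rfl (fun n _ => hdeg n), ← natCard_sigma]
    apply Nat.card_congr
    exact {
      toFun := fun e' => ⟨⟨G.tgt e'.1.1, e'.2.2⟩, ⟨e'.1.1, e'.2.1, rfl⟩⟩
      invFun := fun z => ⟨⟨z.2.1, fun hx' => hyx (z.2.2.1.symm.trans hx')⟩,
        z.2.2.1, (congrArg (Quotient.mk (cSetoid G x)) z.2.2.2).trans z.1.2⟩
      left_inv := fun e' => Subtype.ext rfl
      right_inv := by
        rintro ⟨⟨n, hn⟩, ⟨e, he, hs⟩⟩
        obtain rfl : G.tgt e = n := hs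
        rfl }
  conn := by
    intro q q'
    obtain ⟨a, rfl⟩ := Quotient.exists_rep q
    obtain ⟨b, rfl⟩ := Quotient.exists_rep q'
    refine rtg_map (Quotient.mk (cSetoid G x)) ?_ a b (G.conn a b)
    rintro a' b' ⟨e, hor⟩
    by_cases hex : G.layer e = x
    · have : Quotient.mk (cSetoid G x) a' = Quotient.mk (cSetoid G x) b' := by
        cases hor with
        | inl h2 => rw [← h2.1, ← h2.2]; exact cEdge G hex
        | inr h2 => rw [← h2.1, ← h2.2]; exact (cEdge G hex).symm
      rw [this]
    · refine Relation.ReflTransGen.single ⟨⟨e, hex⟩, ?_⟩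
      cases hor with
      | inl h2 => exact Or.inl ⟨congrArg _ h2.1, congrArg _ h2.2⟩
      | inr h2 => exact Or.inr ⟨congrArg _ h2.1, congrArg _ h2.2⟩

lemma res_outerPSG : (outerPSG G h).res = G.res := by
  rw [PSG.res, PSG.res]
  have := Fintype.sum_fiberwise (Quotient.mk (cSetoid G x)) G.label
  rw [← this]
  congr 1

lemma mguP_subset_split (h : SplitHyp θ σ₂ x t) : mguP S θ ⊆ mguP (mguP S (sbind x t)) σ₂ := by
  rintro B ⟨G, rfl⟩
  exact ⟨outerPSG G h, res_outerPSG G h⟩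


section Compose
variable (G₂ : PSG Sig ar (mguP S (sbind x t)) σ₂)
variable (H : ∀ n : G₂.N, PSG Sig ar S (sbind x t))
variable (hH : ∀ n, (H n).res = G₂.label n)


lemma inner_layer (h : SplitHyp θ σ₂ x t) (n : G₂.N) (e : (H n).E) : (H n).layer e = x :=
  (h.dom_sbind _).mp ((H n).layer_mem e)

include hH in
lemma aSrc_nonempty (n : G₂.N) (y : ℕ) (hy : y ∈ domS σ₂) :
    Nonempty ({e : G₂.E // G₂.layer e = y ∧ G₂.src e = n} ≃
      Σ u : (H n).N, Fin (chi ((H n).label u) (FTerm.var y : FTerm Sig ar))) := by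
  rw [← Finite.card_eq, G₂.out_deg n y hy, ← hH n, PSG.res, chi_sum, natCard_sigma]
  simp [Nat.card_eq_fintype_card]

include hH in
lemma aTgt_nonempty (n : G₂.N) (y : ℕ) (hy : y ∈ domS σ₂) :
    Nonempty ({e : G₂.E // G₂.layer e = y ∧ G₂.tgt e = n} ≃
      Σ u : (H n).N, Fin (chi ((H n).label u) (σ₂ y))) := by
  rw [← Finite.card_eq, G₂.in_deg n y hy, ← hH n, PSG.res, chi_sum, natCard_sigma]
  simp [Nat.card_eq_fintype_card]

noncomputable def aSrc (n : G₂.N) (y : ℕ) (hy : y ∈ domS σ₂) :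
    {e : G₂.E // G₂.layer e = y ∧ G₂.src e = n} ≃
      Σ u : (H n).N, Fin (chi ((H n).label u) (FTerm.var y : FTerm Sig ar)) :=
  Classical.choice (aSrc_nonempty G₂ H hH n y hy)

noncomputable def aTgt (n : G₂.N) (y : ℕ) (hy : y ∈ domS σ₂) :
    {e : G₂.E // G₂.layer e = y ∧ G₂.tgt e = n} ≃
      Σ u : (H n).N, Fin (chi ((H n).label u) (σ₂ y)) :=
  Classical.choice (aTgt_nonempty G₂ H hH n y hy)

/-- source of an outer edge in the combined graph -/
noncomputable def cSrc (e : G₂.E) : Σ n : G₂.N, (H n).N :=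
  ⟨G₂.src e, ((aSrc G₂ H hH (G₂.src e) (G₂.layer e) (G₂.layer_mem e)) ⟨e, rfl, rfl⟩).1⟩

noncomputable def cTgt (e : G₂.E) : Σ n : G₂.N, (H n).N :=
  ⟨G₂.tgt e, ((aTgt G₂ H hH (G₂.tgt e) (G₂.layer e) (G₂.layer_mem e)) ⟨e, rfl, rfl⟩).1⟩

lemma cSrc_eq (e : G₂.E) {n : G₂.N} {y : ℕ} (h1 : G₂.layer e = y) (h2 : G₂.src e = n)
    (hy : y ∈ domS σ₂) :
    cSrc G₂ H hH e = ⟨n, ((aSrc G₂ H hH n y hy) ⟨e, h1, h2⟩).1⟩ := by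
  subst h1; subst h2; rfl

lemma cTgt_eq (e : G₂.E) {n : G₂.N} {y : ℕ} (h1 : G₂.layer e = y) (h2 : G₂.tgt e = n)
    (hy : y ∈ domS σ₂) :
    cTgt G₂ H hH e = ⟨n, ((aTgt G₂ H hH n y hy) ⟨e, h1, h2⟩).1⟩ := by
  subst h1; subst h2; rfl

/-- The combined sharing graph: inner graphs glued along the outer graph. -/
noncomputable def combPSG : PSG Sig ar S θ where
  N := Σ n : G₂.N, (H n).N
  fintypeN := inferInstance
  nonemptyN := ⟨⟨Classical.arbitrary _, Classical.arbitrary _⟩⟩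
  E := (Σ n : G₂.N, (H n).E) ⊕ G₂.E
  fintypeE := inferInstance
  layer := Sum.elim (fun _ => x) (fun e => G₂.layer e)
  src := Sum.elim (fun z => ⟨z.1, (H z.1).src z.2⟩) (cSrc G₂ H hH)
  tgt := Sum.elim (fun z => ⟨z.1, (H z.1).tgt z.2⟩) (cTgt G₂ H hH)
  label := fun z => (H z.1).label z.2
  label_mem := fun z => (H z.1).label_mem z.2
  layer_mem := by
    rintro (z | e)
    · exact h.hxθ
    · exact h.memθ_of_memσ (G₂.layer_mem e)
  out_deg := by
    rintro ⟨n, u⟩ y hy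
    by_cases hyx : y = x
    · subst hyx
      have key : Nat.card {e : (H n).E // (H n).src e = u} =
          Nat.card {e : (Σ m : G₂.N, (H m).E) ⊕ G₂.E //
            Sum.elim (fun _ => y) (fun e => G₂.layer e) e = y ∧
            Sum.elim (fun z => (⟨z.1, (H z.1).src z.2⟩ : Σ m, (H m).N)) (cSrc G₂ H hH) e
              = ⟨n, u⟩} := by
        apply Nat.card_eq_of_bijective
          (fun e => ⟨Sum.inl ⟨n, e.1⟩, rfl, congrArg (Sigma.mk n) e.2⟩)
        constructor
        · intro e e' hee
          have h0 := congrArg Subtype.val hee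
          simp only at h0
          injection h0 with h1
          injection h1 with h2 h3
          exact Subtype.ext h3
        · rintro ⟨(⟨m, e⟩ | e), hw1, hw2⟩
          · obtain rfl : m = n := congrArg Sigma.fst hw2
            simp only [Sum.elim_inl] at hw2
            injection hw2 with h1 h2
            exact ⟨⟨e, h2⟩, Subtype.ext rfl⟩
          · exact absurd (hw1 ▸ G₂.layer_mem e) h.hxσ
      rw [← key, ← (H n).out_deg u y h.x_mem_dom_sbind]
      apply Nat.card_congr
      exact {
        toFun := fun e => ⟨e.1, inner_layer G₂ H h n e.1, e.2⟩
        invFun := fun e => ⟨e.1, e.2.2⟩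
        left_inv := fun e => Subtype.ext rfl
        right_inv := fun e => Subtype.ext rfl }
    · have hyσ : y ∈ domS σ₂ := h.memσ_of_memθ hy hyx
      have key : Nat.card {z : {e : G₂.E // G₂.layer e = y ∧ G₂.src e = n} //
            ((aSrc G₂ H hH n y hyσ) z).1 = u} =
          Nat.card {e : (Σ m : G₂.N, (H m).E) ⊕ G₂.E //
            Sum.elim (fun _ => x) (fun e => G₂.layer e) e = y ∧
            Sum.elim (fun z => (⟨z.1, (H z.1).src z.2⟩ : Σ m, (H m).N)) (cSrc G₂ H hH) e
              = ⟨n, u⟩} := by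
        apply Nat.card_eq_of_bijective
          (fun z => ⟨Sum.inr z.1.1, z.1.2.1, by
            rw [Sum.elim_inr, cSrc_eq G₂ H hH z.1.1 z.1.2.1 z.1.2.2 hyσ]
            exact congrArg (Sigma.mk n) z.2⟩)
        constructor
        · intro z z' hzz
          have h0 := congrArg Subtype.val hzz
          simp only at h0
          injection h0 with h1
          exact Subtype.ext (Subtype.ext h1)
        · rintro ⟨(⟨m, e⟩ | e), hw1, hw2⟩
          · exact absurd ((show x = y from hw1).symm) hyx
          · have hsrc : G₂.src e = n := by
              have := congrArg Sigma.fst hw2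
              simpa [cSrc] using this
            rw [Sum.elim_inr, cSrc_eq G₂ H hH e hw1 hsrc hyσ] at hw2
            injection hw2 with h1 h2
            exact ⟨⟨⟨e, hw1, hsrc⟩, h2⟩, Subtype.ext rfl⟩
      rw [← key,
        Nat.card_congr ((Equiv.subtypeEquiv (aSrc G₂ H hH n y hyσ)
          (fun z => Iff.rfl)).trans (sigmaFstFiber _ u))]
      simp [Nat.card_eq_fintype_card]
  in_deg := by
    rintro ⟨n, u⟩ y hy
    by_cases hyx : y = x
    · subst hyx
      have key : Nat.card {e : (H n).E // (H n).tgt e = u} =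
          Nat.card {e : (Σ m : G₂.N, (H m).E) ⊕ G₂.E //
            Sum.elim (fun _ => y) (fun e => G₂.layer e) e = y ∧
            Sum.elim (fun z => (⟨z.1, (H z.1).tgt z.2⟩ : Σ m, (H m).N)) (cTgt G₂ H hH) e
              = ⟨n, u⟩} := by
        apply Nat.card_eq_of_bijective
          (fun e => ⟨Sum.inl ⟨n, e.1⟩, rfl, congrArg (Sigma.mk n) e.2⟩)
        constructor
        · intro e e' hee
          have h0 := congrArg Subtype.val hee
          simp only at h0
          injection h0 with h1
          injection h1 with h2 h3
          exact Subtype.ext h3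
        · rintro ⟨(⟨m, e⟩ | e), hw1, hw2⟩
          · obtain rfl : m = n := congrArg Sigma.fst hw2
            simp only [Sum.elim_inl] at hw2
            injection hw2 with h1 h2
            exact ⟨⟨e, h2⟩, Subtype.ext rfl⟩
          · exact absurd (hw1 ▸ G₂.layer_mem e) h.hxσ
      have hin := (H n).in_deg u y h.x_mem_dom_sbind
      rw [h.sbind_x] at hin
      rw [← key, h.hθx, ← hin]
      apply Nat.card_congr
      exact {
        toFun := fun e => ⟨e.1, inner_layer G₂ H h n e.1, e.2⟩
        invFun := fun e => ⟨e.1, e.2.2⟩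
        left_inv := fun e => Subtype.ext rfl
        right_inv := fun e => Subtype.ext rfl }
    · have hyσ : y ∈ domS σ₂ := h.memσ_of_memθ hy hyx
      have key : Nat.card {z : {e : G₂.E // G₂.layer e = y ∧ G₂.tgt e = n} //
            ((aTgt G₂ H hH n y hyσ) z).1 = u} =
          Nat.card {e : (Σ m : G₂.N, (H m).E) ⊕ G₂.E //
            Sum.elim (fun _ => x) (fun e => G₂.layer e) e = y ∧
            Sum.elim (fun z => (⟨z.1, (H z.1).tgt z.2⟩ : Σ m, (H m).N)) (cTgt G₂ H hH) e
              = ⟨n, u⟩} := by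
        apply Nat.card_eq_of_bijective
          (fun z => ⟨Sum.inr z.1.1, z.1.2.1, by
            rw [Sum.elim_inr, cTgt_eq G₂ H hH z.1.1 z.1.2.1 z.1.2.2 hyσ]
            exact congrArg (Sigma.mk n) z.2⟩)
        constructor
        · intro z z' hzz
          have h0 := congrArg Subtype.val hzz
          simp only at h0
          injection h0 with h1
          exact Subtype.ext (Subtype.ext h1)
        · rintro ⟨(⟨m, e⟩ | e), hw1, hw2⟩
          · exact absurd ((show x = y from hw1).symm) hyx
          · have htgt : G₂.tgt e = n := by
              have := congrArg Sigma.fst hw2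
              simpa [cTgt] using this
            rw [Sum.elim_inr, cTgt_eq G₂ H hH e hw1 htgt hyσ] at hw2
            injection hw2 with h1 h2
            exact ⟨⟨⟨e, hw1, htgt⟩, h2⟩, Subtype.ext rfl⟩
      rw [← key,
        Nat.card_congr ((Equiv.subtypeEquiv (aTgt G₂ H hH n y hyσ)
          (fun z => Iff.rfl)).trans (sigmaFstFiber _ u)),
        h.hθv y hyx]
      simp [Nat.card_eq_fintype_card]
  conn := by
    rintro ⟨n, u⟩ ⟨m, v⟩
    set r := fun (a b : Σ n : G₂.N, (H n).N) =>
      ∃ e : (Σ n : G₂.N, (H n).E) ⊕ G₂.E,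
        ((Sum.elim (fun z => (⟨z.1, (H z.1).src z.2⟩ : Σ m, (H m).N)) (cSrc G₂ H hH) e = a ∧
          Sum.elim (fun z => (⟨z.1, (H z.1).tgt z.2⟩ : Σ m, (H m).N)) (cTgt G₂ H hH) e = b) ∨
         (Sum.elim (fun z => (⟨z.1, (H z.1).src z.2⟩ : Σ m, (H m).N)) (cSrc G₂ H hH) e = b ∧
          Sum.elim (fun z => (⟨z.1, (H z.1).tgt z.2⟩ : Σ m, (H m).N)) (cTgt G₂ H hH) e = a))
      with hr
    have hfiber : ∀ (n : G₂.N) (u v : (H n).N),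
        Relation.ReflTransGen r ⟨n, u⟩ ⟨n, v⟩ := by
      intro n u v
      refine rtg_map (fun w => (⟨n, w⟩ : Σ n : G₂.N, (H n).N)) ?_ u v ((H n).conn u v)
      rintro a' b' ⟨e, hor⟩
      refine Relation.ReflTransGen.single ⟨Sum.inl ⟨n, e⟩, ?_⟩
      cases hor with
      | inl h2 => exact Or.inl ⟨congrArg (Sigma.mk n) h2.1, congrArg (Sigma.mk n) h2.2⟩
      | inr h2 => exact Or.inr ⟨congrArg (Sigma.mk n) h2.1, congrArg (Sigma.mk n) h2.2⟩
    have houter : ∀ (n m : G₂.N) (u : (H n).N) (v : (H m).N),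
        Relation.ReflTransGen r ⟨n, u⟩ ⟨m, v⟩ := by
      intro n m u v
      have hmap : Relation.ReflTransGen r
          ⟨n, (Classical.arbitrary ((H n).N))⟩ ⟨m, (Classical.arbitrary ((H m).N))⟩ := by
        refine rtg_map (fun n => (⟨n, Classical.arbitrary ((H n).N)⟩ : Σ n : G₂.N, (H n).N))
          ?_ n m (G₂.conn n m)
        rintro a' b' ⟨e, hor⟩
        have hstep : r (cSrc G₂ H hH e) (cTgt G₂ H hH e) :=
          ⟨Sum.inr e, Or.inl ⟨rfl, rfl⟩⟩
        cases hor with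
        | inl h2 =>
          have h1 : Relation.ReflTransGen r
              ⟨a', Classical.arbitrary ((H a').N)⟩ (cSrc G₂ H hH e) := by
            rw [← h2.1]; exact hfiber _ _ _
          have h3 : Relation.ReflTransGen r (cTgt G₂ H hH e)
              ⟨b', Classical.arbitrary ((H b').N)⟩ := by
            rw [← h2.2]; exact hfiber _ _ _
          exact (h1.tail hstep).trans h3
        | inr h2 =>
          have h1 : Relation.ReflTransGen r
              ⟨a', Classical.arbitrary ((H a').N)⟩ (cTgt G₂ H hH e) := by
            rw [← h2.2]; exact hfiber _ _ _
          have h3 : Relation.ReflTransGen r (cSrc G₂ H hH e)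
              ⟨b', Classical.arbitrary ((H b').N)⟩ := by
            rw [← h2.1]; exact hfiber _ _ _
          exact (h1.tail ⟨Sum.inr e, Or.inr ⟨rfl, rfl⟩⟩).trans h3
      exact ((hfiber n u _).trans hmap).trans (hfiber m _ v)
    exact houter n m u v

lemma res_combPSG : (combPSG h G₂ H hH).res = G₂.res := by
  rw [PSG.res, PSG.res]
  have h1 : ∀ n : G₂.N, (∑ u : (H n).N, (H n).label u) = G₂.label n := by
    intro n; rw [← hH n, PSG.res]
  calc (∑ z : (combPSG h G₂ H hH).N, (combPSG h G₂ H hH).label z)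
      = ∑ z : Σ n : G₂.N, (H n).N, (H z.1).label z.2 := by congr 1
    _ = ∑ n : G₂.N, ∑ u : (H n).N, (H n).label u := by
        rw [← Finset.univ_sigma_univ, Finset.sum_sigma]
    _ = ∑ n : G₂.N, G₂.label n := Finset.sum_congr rfl (fun n _ => h1 n)

end Compose

lemma mguP_supset_split (h : SplitHyp θ σ₂ x t) :
    mguP (mguP S (sbind x t)) σ₂ ⊆ mguP S θ := by
  rintro B ⟨G₂, rfl⟩
  choose H hH using fun n => G₂.label_mem n
  exact ⟨combPSG h G₂ H hH, res_combPSG h G₂ H hH⟩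

lemma mguP_split (h : SplitHyp θ σ₂ x t) (S : Set (ℕ →₀ ℕ)) :
    mguP S θ = mguP (mguP S (sbind x t)) σ₂ :=
  le_antisymm (mguP_subset_split h) (mguP_supset_split h)

end Split

theorem mguSeq_eq_mguP_aux (S : Set (ℕ →₀ ℕ)) (l : List (ℕ × FTerm Sig ar))
    (hnodup : (l.map Prod.fst).Nodup)
    (hbind : ∀ p ∈ l, p.2 ≠ FTerm.var p.1) :
    mguSeq S l = mguP S (toSubst l) := by
  induction l generalizing S with
  | nil => exact (mguP_empty S (fun v => rfl)).symm
  | cons p l' ih =>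
    obtain ⟨x, t⟩ := p
    simp only [List.map_cons, List.nodup_cons] at hnodup
    have hx : toSubst l' x = FTerm.var x := toSubst_of_not_mem hnodup.1
    have ht : t ≠ FTerm.var x := hbind (x, t) List.mem_cons_self
    have hsh : SplitHyp (toSubst ((x, t) :: l')) (toSubst l') x t :=
      ⟨by simp [toSubst], fun v hv => by simp [toSubst, hv], hx, ht⟩
    show mguSeq (mguP S (sbind x t)) l' = _
    rw [ih (mguP S (sbind x t)) hnodup.2
      (fun p hp => hbind p (List.mem_cons_of_mem _ hp))]
    exact (mguP_split hsh S).symm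


/-- Theorem 1 of the paper: for every set `S` of ω-sharing
groups and every idempotent substitution `θ` (presented as its list of bindings
`{x₁/t₁, …, x_p/t_p}`), sequential and parallel abstract unification coincide:
`mgu_ω(S,θ) = mgu_p(S,θ)`. -/
theorem mguSeq_eq_mguP (Sig : Type) (ar : Sig → ℕ)
    (S : Set (ℕ →₀ ℕ)) (l : List (ℕ × FTerm Sig ar))
    (hnodup : (l.map Prod.fst).Nodup)
    (hbind : ∀ p ∈ l, p.2 ≠ FTerm.var p.1)
    (hidem : Idem (toSubst l)) :
    mguSeq S l = mguP S (toSubst l) :=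
  mguSeq_eq_mguP_aux S l hnodup hbind
end

section
/- Optimality of parallel abstract unification when the binding variables are variables of interest: let U be a finite set of variables, let S be a set of ω-sharing groups whose supports are contained in U and which contains the empty multiset, and let θ be an idempotent substitution with vars(θ) ⊆ U. Then for every B ∈ mgu_p(S,θ) there exist an idempotent substitution δ with vars(δ) ∩ vars(θ) ⊆ U and rng(δ) ∩ U = ∅, satisfying δ⁻¹(v)|_U ∈ S for every variable v ∈ 𝒱, an idempotent most general unifier η of the set of equations Eq(δ) ∪ Eq(θ), and a variable w ∈ 𝒱, such that η⁻¹(w)|_U = B. -/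
open Classical

variable {Sig : Type} {ar : Sig → ℕ}

/-- `θ⁻¹(v)`: the ω-sharing group mapping each variable `w` to the number of
occurrences of `v` in `θ(w)` (as a plain function). -/
def invSub (θ : ℕ → FTerm Sig ar) (v : ℕ) : ℕ → ℕ := fun w => FTerm.occ v (θ w)

/-- Restriction `M|_U` of a multiset of variables to a finite set `U`. -/
noncomputable def restr (U : Finset ℕ) (f : ℕ → ℕ) : ℕ →₀ ℕ :=
  Finsupp.onFinset U (fun v => if v ∈ U then f v else 0)
    (fun v h => by by_contra hc; simp [hc] at h)

/-- The set of equations `Eq(θ) = { x = θ(x) : x ∈ dom(θ) }`. -/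
def EqSet (θ : ℕ → FTerm Sig ar) : Set (FTerm Sig ar × FTerm Sig ar) :=
  { p | ∃ x ∈ domS θ, p = (FTerm.var x, θ x) }

/-- `η` is a unifier of the set of equations `E`. -/
def Unifies (η : ℕ → FTerm Sig ar) (E : Set (FTerm Sig ar × FTerm Sig ar)) : Prop :=
  ∀ p ∈ E, FTerm.subst η p.1 = FTerm.subst η p.2

/-- `η` is a most general unifier of the set of equations `E`: it is a unifier
and every unifier factors through it. -/
def IsMGU (η : ℕ → FTerm Sig ar) (E : Set (FTerm Sig ar × FTerm Sig ar)) : Prop :=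
  Unifies η E ∧ ∀ τ : ℕ → FTerm Sig ar, Unifies τ E →
    ∃ τ' : ℕ → FTerm Sig ar, ∀ x, τ x = FTerm.subst τ' (η x)
/-! ### Auxiliary machinery for the proof -/

namespace FTerm

theorem occ_var (v w : ℕ) : occ v (var w : FTerm Sig ar) = if w = v then 1 else 0 := rfl

theorem occ_app (v : ℕ) (f : Sig) (ts : Fin (ar f) → FTerm Sig ar) :
    occ v (app f ts) = ∑ i, occ v (ts i) := rfl

theorem subst_var_eq (t : FTerm Sig ar) : t.subst var = t := by
  induction t with
  | var v => rfl
  | app f ts ih => exact congrArg _ (funext ih)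

theorem subst_subst (σ τ : ℕ → FTerm Sig ar) (t : FTerm Sig ar) :
    (t.subst σ).subst τ = t.subst (fun v => (σ v).subst τ) := by
  induction t with
  | var v => rfl
  | app f ts ih => exact congrArg _ (funext ih)

theorem subst_congr {σ τ : ℕ → FTerm Sig ar} (t : FTerm Sig ar)
    (h : ∀ v, occ v t ≠ 0 → σ v = τ v) : t.subst σ = t.subst τ := by
  induction t with
  | var v => exact h v (by simp [occ])
  | app f ts ih =>
      refine congrArg _ (funext fun i => ih i fun v hv => h v ?_)
      rw [occ_app]
      intro h0
      exact hv (Finset.sum_eq_zero_iff.mp h0 i (Finset.mem_univ i))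

/-- The type of variable occurrences of a term. -/
def OccT : FTerm Sig ar → Type
  | var _ => PUnit
  | app f ts => Σ i : Fin (ar f), OccT (ts i)

instance occTFintype : (t : FTerm Sig ar) → Fintype (OccT t)
  | var _ => inferInstanceAs (Fintype PUnit)
  | app _ ts =>
      letI : ∀ i, Fintype (OccT (ts i)) := fun i => occTFintype (ts i)
      inferInstanceAs (Fintype (Σ i, OccT (ts i)))

/-- The variable sitting at a given occurrence. -/
def varAt : (t : FTerm Sig ar) → OccT t → ℕ
  | var v, _ => v
  | app _ ts, ⟨i, o⟩ => varAt (ts i) o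

/-- Replace each variable occurrence of `t` by a term depending on the occurrence. -/
def repl : (t : FTerm Sig ar) → (OccT t → FTerm Sig ar) → FTerm Sig ar
  | var _, F => F PUnit.unit
  | app f ts, F => app f (fun i => repl (ts i) (fun o => F ⟨i, o⟩))

theorem sum_occT_app (f : Sig) (ts : Fin (ar f) → FTerm Sig ar)
    (g : OccT (app f ts) → ℕ) :
    ∑ o : OccT (app f ts), g o = ∑ i, ∑ o : OccT (ts i), g ⟨i, o⟩ := by
  rw [show (Finset.univ : Finset (OccT (app f ts)))
      = Finset.univ.sigma (fun i : Fin (ar f) => (Finset.univ : Finset (OccT (ts i)))) from rfl]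
  exact Finset.sum_sigma Finset.univ (fun i : Fin (ar f) => (Finset.univ : Finset (OccT (ts i))))
    (fun o => g o)

theorem occ_repl (x : ℕ) : ∀ (t : FTerm Sig ar) (F : OccT t → FTerm Sig ar),
    occ x (repl t F) = ∑ o : OccT t, occ x (F o)
  | var v, F => by
      letI : Unique (OccT (var (Sig := Sig) (ar := ar) v)) := inferInstanceAs (Unique PUnit)
      exact (Fintype.sum_unique (fun o : OccT (var (Sig := Sig) (ar := ar) v) =>
        occ x (F o))).symm
  | app f ts, F => by
      rw [repl, occ_app, sum_occT_app]
      exact Finset.sum_congr rfl fun i _ => occ_repl x (ts i) _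

theorem subst_repl (σ : ℕ → FTerm Sig ar) : ∀ (t : FTerm Sig ar) (F : OccT t → FTerm Sig ar),
    subst σ (repl t F) = repl t (fun o => subst σ (F o))
  | var v, F => rfl
  | app f ts, F => by
      rw [repl, repl]
      exact congrArg _ (funext fun i => subst_repl σ (ts i) _)

theorem subst_eq_repl (Δ : ℕ → FTerm Sig ar) : ∀ t : FTerm Sig ar,
    subst Δ t = repl t (fun o => Δ (varAt t o))
  | var v => rfl
  | app f ts => by
      rw [repl]
      exact congrArg _ (funext fun i => subst_eq_repl Δ (ts i))

theorem repl_injective : ∀ (t : FTerm Sig ar) (F G : OccT t → FTerm Sig ar),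
    repl t F = repl t G → ∀ o, F o = G o
  | var v, F, G, h, o => by cases o; exact h
  | app f ts, F, G, h, ⟨i, o⟩ => by
      rw [repl, repl] at h
      injection h with h1 h2
      exact repl_injective (ts i) _ _ (congrFun h2 i) o

theorem occ_eq_sum (x : ℕ) (t : FTerm Sig ar) :
    occ x t = ∑ o : OccT t, if varAt t o = x then 1 else 0 := by
  conv_lhs => rw [← subst_var_eq t, subst_eq_repl, occ_repl]
  rfl

theorem occ_subst (x : ℕ) (σ : ℕ → FTerm Sig ar) (t : FTerm Sig ar) :
    occ x (subst σ t) = ∑ o : OccT t, occ x (σ (varAt t o)) := by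
  rw [subst_eq_repl, occ_repl]

theorem occ_varAt_ne_zero (t : FTerm Sig ar) (o : OccT t) : occ (varAt t o) t ≠ 0 := by
  rw [occ_eq_sum]
  intro h0
  have := Finset.sum_eq_zero_iff.mp h0 o (Finset.mem_univ o)
  simp at this

end FTerm

theorem chi_eq_sum (B : ℕ →₀ ℕ) (t : FTerm Sig ar) :
    chi B t = ∑ o : FTerm.OccT t, B (FTerm.varAt t o) := by
  unfold chi
  calc ∑ v ∈ B.support, B v * FTerm.occ v t
      = ∑ v ∈ B.support, ∑ o : FTerm.OccT t, (if FTerm.varAt t o = v then B v else 0) := by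
        refine Finset.sum_congr rfl fun v _ => ?_
        rw [FTerm.occ_eq_sum, Finset.mul_sum]
        exact Finset.sum_congr rfl fun o _ => by split <;> simp
    _ = ∑ o : FTerm.OccT t, ∑ v ∈ B.support, (if FTerm.varAt t o = v then B v else 0) :=
        Finset.sum_comm
    _ = ∑ o : FTerm.OccT t, B (FTerm.varAt t o) := by
        refine Finset.sum_congr rfl fun o _ => ?_
        rw [Finset.sum_ite_eq]
        split
        · rfl
        · exact (Finsupp.notMem_support_iff.mp (by assumption)).symm

theorem chi_var (B : ℕ →₀ ℕ) (x : ℕ) : chi B (FTerm.var x : FTerm Sig ar) = B x := by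
  rw [chi_eq_sum]
  letI : Unique (FTerm.OccT (FTerm.var (Sig := Sig) (ar := ar) x)) := inferInstanceAs (Unique PUnit)
  exact Fintype.sum_unique _
namespace FTerm
section Mk
variable (hsig : ∀ k : ℕ, ∃ f : Sig, ar f = k)

noncomputable def fsym (k : ℕ) : Sig := (hsig k).choose

theorem ar_fsym (k : ℕ) : ar (fsym hsig k) = k := (hsig k).choose_spec

/-- A term with top symbol of arity `k` and the given arguments. -/
noncomputable def mk (k : ℕ) (g : Fin k → FTerm Sig ar) : FTerm Sig ar :=
  app (fsym hsig k) fun i => g (Fin.cast (ar_fsym hsig k) i)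

theorem occ_mk (x : ℕ) (k : ℕ) (g : Fin k → FTerm Sig ar) :
    occ x (mk hsig k g) = ∑ i : Fin k, occ x (g i) := by
  rw [mk, occ_app]
  exact Fintype.sum_equiv (finCongr (ar_fsym hsig k)) _ _ (fun i => rfl)

theorem subst_mk (σ : ℕ → FTerm Sig ar) (k : ℕ) (g : Fin k → FTerm Sig ar) :
    subst σ (mk hsig k g) = mk hsig k (fun i => subst σ (g i)) := rfl

theorem mk_ne_var (k : ℕ) (g : Fin k → FTerm Sig ar) (x : ℕ) : mk hsig k g ≠ var x := by
  rw [mk]; exact fun h => by cases h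

theorem mk_congr {k : ℕ} {g g' : Fin k → FTerm Sig ar} (h : ∀ i, g i = g' i) :
    mk hsig k g = mk hsig k g' := by
  rw [mk, mk]; exact congrArg _ (funext fun i => h _)

theorem mk_inj {k : ℕ} {g g' : Fin k → FTerm Sig ar}
    (h : mk hsig k g = mk hsig k g') (i : Fin k) : g i = g' i := by
  rw [mk, mk] at h
  injection h with h1 h2
  have := congrFun h2 (Fin.cast (ar_fsym hsig k).symm i)
  simpa using this

end Mk
end FTerm

/-- A subtype of a sigma type as a sigma of subtypes. -/
def sigmaSubtypeEquiv {α : Type*} {β : α → Type*} (p : ∀ a, β a → Prop) :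
    {s : Σ a, β a // p s.1 s.2} ≃ Σ a, {b : β a // p a b} where
  toFun s := ⟨s.1.1, ⟨s.1.2, s.2⟩⟩
  invFun s := ⟨⟨s.1, s.2.1⟩, s.2.2⟩
  left_inv := by rintro ⟨⟨a, b⟩, h⟩; rfl
  right_inv := by rintro ⟨a, b, h⟩; rfl

/-- The fiber of the first projection of a sigma of `Fin`s. -/
def sigmaFiberFin {N : Type*} (c : N → ℕ) (m : N) :
    {s : Σ n, Fin (c n) // s.1 = m} ≃ Fin (c m) where
  toFun s := Fin.cast (congrArg c s.2) s.1.2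
  invFun i := ⟨⟨m, i⟩, rfl⟩
  left_inv := by rintro ⟨⟨n, i⟩, rfl⟩; rfl
  right_inv i := rfl

section Graph
variable {Sig : Type} {ar : Sig → ℕ}
variable (hsig : ∀ k : ℕ, ∃ f : Sig, ar f = k) (U : Finset ℕ) {S : Set (ℕ →₀ ℕ)}
variable {θ : ℕ → FTerm Sig ar} (G : PSG Sig ar S θ)

/-- Fresh variables, one for each node of the graph. -/
noncomputable def zvar (n : G.N) : ℕ := U.sup id + 1 + (Fintype.equivFin G.N n : ℕ)

theorem zvar_inj {a b : G.N} (h : zvar U G a = zvar U G b) : a = b := by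
  unfold zvar at h
  exact (Fintype.equivFin G.N).injective (Fin.ext (by omega))

theorem zvar_not_mem (n : G.N) : zvar U G n ∉ U := by
  intro h
  have := Finset.le_sup (f := id) h
  simp only [id] at this
  unfold zvar at this
  omega

theorem res_apply (v : ℕ) : G.res v = ∑ n : G.N, G.label n v := by
  rw [PSG.res, Finset.sum_apply']

/-- An enumeration of `G.res v` slots, with `G.label n v` many slots for node `n`. -/
noncomputable def listEquiv (v : ℕ) : (Σ n : G.N, Fin (G.label n v)) ≃ Fin (G.res v) :=
  Fintype.equivFinOfCardEq (by simp [res_apply])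

noncomputable def listing (v : ℕ) (i : Fin (G.res v)) : G.N := ((listEquiv G v).symm i).1

theorem card_listing_fiber (v : ℕ) (m : G.N) :
    Fintype.card {i : Fin (G.res v) // listing G v i = m} = G.label m v := by
  classical
  have e1 : {i : Fin (G.res v) // listing G v i = m}
      ≃ {s : Σ n : G.N, Fin (G.label n v) // s.1 = m} :=
    ((Equiv.subtypeEquiv (listEquiv G v).symm (fun i => Iff.rfl)))
  rw [Fintype.card_congr (e1.trans (sigmaFiberFin _ m)), Fintype.card_fin]

/-- Slot positions of a term: one for each occurrence `o` of a variable `v`,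
times `G.res v` many positions. -/
def Slots (t : FTerm Sig ar) : Type := Σ o : FTerm.OccT t, Fin (G.res (FTerm.varAt t o))

noncomputable instance (t : FTerm Sig ar) : Fintype (Slots G t) := by
  unfold Slots; infer_instance

noncomputable def smap (t : FTerm Sig ar) (s : Slots G t) : G.N :=
  listing G (FTerm.varAt t s.1) s.2

theorem card_smap_fiber (t : FTerm Sig ar) (m : G.N) :
    Fintype.card {s : Slots G t // smap G t s = m} = chi (G.label m) t := by
  classical
  have e1 : {s : Slots G t // smap G t s = m}
      ≃ Σ o : FTerm.OccT t, {i : Fin (G.res (FTerm.varAt t o)) //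
          listing G (FTerm.varAt t o) i = m} :=
    sigmaSubtypeEquiv (fun (o : FTerm.OccT t) (i : Fin (G.res (FTerm.varAt t o))) =>
      listing G (FTerm.varAt t o) i = m)
  rw [Fintype.card_congr e1, Fintype.card_sigma, chi_eq_sum]
  exact Finset.sum_congr rfl fun o _ => card_listing_fiber G _ m

theorem card_edge_fiber_tgt (u : ℕ) (hu : u ∈ domS θ) (m : G.N) :
    Fintype.card {e : {e : G.E // G.layer e = u} // G.tgt e.1 = m} = chi (G.label m) (θ u) := by
  classical
  calc Fintype.card {e : {e : G.E // G.layer e = u} // G.tgt e.1 = m}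
      = Fintype.card {e : G.E // G.layer e = u ∧ G.tgt e = m} :=
        Fintype.card_congr (Equiv.subtypeSubtypeEquivSubtypeInter (fun e => G.layer e = u) (fun e => G.tgt e = m))
    _ = Nat.card {e : G.E // G.layer e = u ∧ G.tgt e = m} := Nat.card_eq_fintype_card.symm
    _ = chi (G.label m) (θ u) := G.in_deg m u hu

/-- The bijection between slot positions of `θ u` and the edges of layer `u`,
matching targets with listed nodes. -/
noncomputable def phi (u : ℕ) (hu : u ∈ domS θ) :
    Slots G (θ u) ≃ {e : G.E // G.layer e = u} :=
  Equiv.ofFiberEquiv (f := smap G (θ u)) (g := fun e => G.tgt e.1)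
    (fun m => Fintype.equivOfCardEq (by rw [card_smap_fiber, card_edge_fiber_tgt G u hu]))

theorem phi_tgt (u : ℕ) (hu : u ∈ domS θ) (s : Slots G (θ u)) :
    G.tgt ((phi G u hu s).1) = smap G (θ u) s := by
  unfold phi
  exact Equiv.ofFiberEquiv_map (f := smap G (θ u)) (g := fun (e : {e : G.E // G.layer e = u}) => G.tgt e.1) _ s

end Graph
theorem sum_ite_card {α : Type*} [Fintype α] (p : α → Prop) [DecidablePred p] :
    ∑ a : α, (if p a then 1 else 0) = Fintype.card {a // p a} := by
  rw [Fintype.card_subtype, Finset.card_filter]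

theorem FTerm.repl_ne_var {y : ℕ} (t : FTerm Sig ar) (F : FTerm.OccT t → FTerm Sig ar)
    (h : ∀ o, F o ≠ FTerm.var y) : FTerm.repl t F ≠ FTerm.var y := by
  cases t with
  | var v => exact h _
  | app f ts => rw [FTerm.repl]; exact fun hc => by cases hc

section Graph2
variable {Sig : Type} {ar : Sig → ℕ}
variable (hsig : ∀ k : ℕ, ∃ f : Sig, ar f = k) (U : Finset ℕ) {S : Set (ℕ →₀ ℕ)}
variable {θ : ℕ → FTerm Sig ar} (G : PSG Sig ar S θ)

theorem card_edge_fiber_src (u : ℕ) (hu : u ∈ domS θ) (n : G.N) :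
    Fintype.card {e : {e : G.E // G.layer e = u} // G.src e.1 = n} = G.label n u := by
  classical
  calc Fintype.card {e : {e : G.E // G.layer e = u} // G.src e.1 = n}
      = Fintype.card {e : G.E // G.layer e = u ∧ G.src e = n} :=
        Fintype.card_congr (Equiv.subtypeSubtypeEquivSubtypeInter
          (fun e => G.layer e = u) (fun e => G.src e = n))
    _ = Nat.card {e : G.E // G.layer e = u ∧ G.src e = n} := Nat.card_eq_fintype_card.symm
    _ = chi (G.label n) (FTerm.var u) := G.out_deg n u hu
    _ = G.label n u := chi_var _ _

/-- The concrete substitution `δ`. -/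
noncomputable def delta : ℕ → FTerm Sig ar := fun v =>
  if hv : v ∈ domS θ then
    FTerm.repl (θ v) (fun o => FTerm.mk hsig (G.res (FTerm.varAt (θ v) o))
      (fun i => FTerm.var (zvar U G (G.src ((phi G v hv ⟨o, i⟩).1)))))
  else if v ∈ U then
    FTerm.mk hsig (G.res v) (fun i => FTerm.var (zvar U G (listing G v i)))
  else FTerm.var v

theorem occ_delta_zvar (v : ℕ) (hv : v ∈ U) (n : G.N) :
    FTerm.occ (zvar U G n) (delta hsig U G v) = G.label n v := by
  classical
  unfold delta
  by_cases hd : v ∈ domS θ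
  · rw [dif_pos hd, FTerm.occ_repl]
    have h1 : ∀ (o : FTerm.OccT (θ v)),
        FTerm.occ (zvar U G n) (FTerm.mk hsig (G.res (FTerm.varAt (θ v) o))
          (fun i => FTerm.var (zvar U G (G.src ((phi G v hd ⟨o, i⟩).1)))))
        = ∑ i : Fin (G.res (FTerm.varAt (θ v) o)),
            (if G.src ((phi G v hd ⟨o, i⟩).1) = n then 1 else 0) := by
      intro o
      rw [FTerm.occ_mk]
      refine Finset.sum_congr rfl fun i _ => ?_
      rw [FTerm.occ_var]
      congr 1
      exact propext ⟨fun h => zvar_inj U G h, fun h => congrArg _ h⟩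
    rw [Finset.sum_congr rfl fun o _ => h1 o]
    have h2 : ∑ o : FTerm.OccT (θ v), ∑ i : Fin (G.res (FTerm.varAt (θ v) o)),
          (if G.src ((phi G v hd ⟨o, i⟩).1) = n then 1 else 0)
        = ∑ s : Slots G (θ v), (if G.src ((phi G v hd s).1) = n then 1 else 0) := by
      rw [show (Finset.univ : Finset (Slots G (θ v)))
          = Finset.univ.sigma (fun o : FTerm.OccT (θ v) =>
              (Finset.univ : Finset (Fin (G.res (FTerm.varAt (θ v) o))))) from rfl]
      exact (Finset.sum_sigma Finset.univ (fun o : FTerm.OccT (θ v) =>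
          (Finset.univ : Finset (Fin (G.res (FTerm.varAt (θ v) o)))))
        (fun s => if G.src ((phi G v hd s).1) = n then 1 else 0)).symm
    rw [h2, sum_ite_card]
    calc Fintype.card {s : Slots G (θ v) // G.src ((phi G v hd s).1) = n}
        = Fintype.card {e : {e : G.E // G.layer e = v} // G.src e.1 = n} :=
          Fintype.card_congr (Equiv.subtypeEquiv (phi G v hd) (fun s => Iff.rfl))
      _ = G.label n v := card_edge_fiber_src G v hd n
  · rw [dif_neg hd, if_pos hv, FTerm.occ_mk]
    have h1 : ∀ i : Fin (G.res v),
        FTerm.occ (zvar U G n) (FTerm.var (zvar U G (listing G v i)) : FTerm Sig ar)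
        = if listing G v i = n then 1 else 0 := by
      intro i
      rw [FTerm.occ_var]
      congr 1
      exact propext ⟨fun h => zvar_inj U G h, fun h => congrArg _ h⟩
    rw [Finset.sum_congr rfl fun i _ => h1 i, sum_ite_card, card_listing_fiber]

theorem occ_delta_other (v : ℕ) (hv : v ∈ U) (x : ℕ) (hx : ∀ n, x ≠ zvar U G n) :
    FTerm.occ x (delta hsig U G v) = 0 := by
  classical
  unfold delta
  by_cases hd : v ∈ domS θ
  · rw [dif_pos hd, FTerm.occ_repl]
    refine Finset.sum_eq_zero fun o _ => ?_
    rw [FTerm.occ_mk]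
    refine Finset.sum_eq_zero fun i _ => ?_
    rw [FTerm.occ_var, if_neg]
    exact fun h => hx _ h.symm
  · rw [dif_neg hd, if_pos hv, FTerm.occ_mk]
    refine Finset.sum_eq_zero fun i _ => ?_
    rw [FTerm.occ_var, if_neg]
    exact fun h => hx _ h.symm

theorem delta_ne_var (v : ℕ) (hv : v ∈ U) (y : ℕ) :
    delta hsig U G v ≠ FTerm.var y := by
  unfold delta
  by_cases hd : v ∈ domS θ
  · rw [dif_pos hd]
    exact FTerm.repl_ne_var _ _ (fun o => FTerm.mk_ne_var hsig _ _ _)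
  · rw [dif_neg hd, if_pos hv]
    exact FTerm.mk_ne_var hsig _ _ _

theorem delta_of_not_mem (v : ℕ) (hv : v ∉ U) (hθU : varsS θ ⊆ ↑U) :
    delta hsig U G v = FTerm.var v := by
  unfold delta
  rw [dif_neg, if_neg hv]
  exact fun hd => hv (hθU (Or.inl hd))

theorem domS_delta (hθU : varsS θ ⊆ ↑U) : domS (delta hsig U G) = ↑U := by
  ext v
  constructor
  · intro hv
    by_contra hc
    exact hv (delta_of_not_mem hsig U G v hc hθU)
  · intro hv
    exact delta_ne_var hsig U G v hv v

end Graph2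
section Graph3
variable {Sig : Type} {ar : Sig → ℕ}
variable (hsig : ∀ k : ℕ, ∃ f : Sig, ar f = k) (U : Finset ℕ) {S : Set (ℕ →₀ ℕ)}
variable {θ : ℕ → FTerm Sig ar} (G : PSG Sig ar S θ)

/-- The distinguished fresh variable `w`. -/
noncomputable def wvar : ℕ := zvar U G (Classical.arbitrary G.N)

/-- The substitution collapsing all fresh variables to `w`. -/
noncomputable def zeta : ℕ → FTerm Sig ar := fun y =>
  if ∃ n, y = zvar U G n then FTerm.var (wvar U G) else FTerm.var y

/-- The most general unifier of `Eq(δ) ∪ Eq(θ)`. -/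
noncomputable def eta : ℕ → FTerm Sig ar := fun x =>
  FTerm.subst (zeta U G) (delta hsig U G x)

/-- The "collapsed pattern" substitution. -/
noncomputable def Pt : ℕ → FTerm Sig ar := fun v =>
  FTerm.mk hsig (G.res v) (fun _ => FTerm.var (wvar U G))

theorem zeta_zvar (n : G.N) : zeta U G (zvar U G n) = FTerm.var (wvar U G) :=
  if_pos ⟨n, rfl⟩

theorem zeta_other (y : ℕ) (hy : ∀ n, y ≠ zvar U G n) : zeta U G y = FTerm.var y :=
  if_neg (fun ⟨n, h⟩ => hy n h)

theorem wvar_not_mem : wvar U G ∉ U := zvar_not_mem U G _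

theorem eta_eq_Pt (x : ℕ) (hxU : x ∈ U) (hxd : x ∉ domS θ) :
    eta hsig U G x = Pt hsig U G x := by
  unfold eta delta Pt
  rw [dif_neg hxd, if_pos hxU, FTerm.subst_mk]
  exact FTerm.mk_congr hsig fun i => zeta_zvar U G _

theorem eta_eq_substPt (x : ℕ) (hxd : x ∈ domS θ) :
    eta hsig U G x = FTerm.subst (Pt hsig U G) (θ x) := by
  unfold eta delta
  rw [dif_pos hxd, FTerm.subst_repl, FTerm.subst_eq_repl]
  refine congrArg _ (funext fun o => ?_)
  rw [FTerm.subst_mk]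
  exact FTerm.mk_congr hsig fun i => zeta_zvar U G _

theorem eta_ne_var (x : ℕ) (hxU : x ∈ U) (y : ℕ) : eta hsig U G x ≠ FTerm.var y := by
  unfold eta delta
  by_cases hd : x ∈ domS θ
  · rw [dif_pos hd, FTerm.subst_repl]
    exact FTerm.repl_ne_var _ _ (fun o => by
      rw [FTerm.subst_mk]; exact FTerm.mk_ne_var hsig _ _ _)
  · rw [dif_neg hd, if_pos hxU, FTerm.subst_mk]
    exact FTerm.mk_ne_var hsig _ _ _

theorem eta_of_not_mem (x : ℕ) (hxU : x ∉ U) (hθU : varsS θ ⊆ ↑U) :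
    eta hsig U G x = zeta U G x := by
  unfold eta
  rw [delta_of_not_mem hsig U G x hxU hθU]
  rfl

theorem occ_wvar_subst_zeta (t : FTerm Sig ar) :
    FTerm.occ (wvar U G) (FTerm.subst (zeta U G) t) = ∑ n : G.N, FTerm.occ (zvar U G n) t := by
  classical
  rw [FTerm.occ_subst]
  have key : ∀ y : ℕ, FTerm.occ (wvar U G) (zeta U G y)
      = ∑ n : G.N, (if y = zvar U G n then 1 else 0) := by
    intro y
    by_cases hy : ∃ n, y = zvar U G n
    · obtain ⟨m, rfl⟩ := hy
      rw [zeta_zvar, FTerm.occ_var, if_pos rfl]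
      have : ∀ n : G.N, (if zvar U G m = zvar U G n then 1 else 0)
          = if m = n then 1 else 0 := by
        intro n
        congr 1
        exact propext ⟨fun h => zvar_inj U G h, fun h => congrArg _ h⟩
      rw [Finset.sum_congr rfl fun n _ => this n, Finset.sum_ite_eq, if_pos (Finset.mem_univ m)]
    · rw [zeta_other U G y (fun n h => hy ⟨n, h⟩), FTerm.occ_var, if_neg, Finset.sum_eq_zero]
      · intro n _
        rw [if_neg (fun h => hy ⟨n, h⟩)]
      · intro h
        exact hy ⟨Classical.arbitrary G.N, h⟩
  rw [Finset.sum_congr rfl fun o _ => key _]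
  rw [Finset.sum_comm]
  exact Finset.sum_congr rfl fun n _ => (FTerm.occ_eq_sum _ _).symm

theorem occ_wvar_eta (v : ℕ) (hv : v ∈ U) :
    FTerm.occ (wvar U G) (eta hsig U G v) = G.res v := by
  unfold eta
  rw [occ_wvar_subst_zeta, res_apply]
  exact Finset.sum_congr rfl fun n _ => occ_delta_zvar hsig U G v hv n

end Graph3
section Graph4
variable {Sig : Type} {ar : Sig → ℕ}
variable (hsig : ∀ k : ℕ, ∃ f : Sig, ar f = k) (U : Finset ℕ) {S : Set (ℕ →₀ ℕ)}
variable {θ : ℕ → FTerm Sig ar} (G : PSG Sig ar S θ)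

theorem mem_rng_delta (hθU : varsS θ ⊆ ↑U) (v : ℕ) (hv : v ∈ rngS (delta hsig U G)) :
    ∃ n, v = zvar U G n := by
  obtain ⟨s, ⟨x, rfl⟩, hs⟩ := hv
  obtain ⟨s', ⟨hx, rfl⟩, hv⟩ := hs
  rw [domS_delta hsig U G hθU] at hx
  by_contra hc
  push_neg at hc
  exact hv (occ_delta_other hsig U G x hx v hc)

theorem eta_unifies (hθU : varsS θ ⊆ ↑U) (hidem : Idem θ) :
    Unifies (eta hsig U G) (EqSet (delta hsig U G) ∪ EqSet θ) := by
  rintro p (⟨x, hx, rfl⟩ | ⟨x, hx, rfl⟩)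
  · show eta hsig U G x = FTerm.subst (eta hsig U G) (delta hsig U G x)
    rw [domS_delta hsig U G hθU] at hx
    show FTerm.subst (zeta U G) (delta hsig U G x) = _
    refine (FTerm.subst_congr _ fun v hv => ?_).symm
    have hz : ∃ n, v = zvar U G n := by
      by_contra hc
      push_neg at hc
      exact hv (occ_delta_other hsig U G x hx v hc)
    obtain ⟨n, rfl⟩ := hz
    rw [eta_of_not_mem hsig U G _ (zvar_not_mem U G n) hθU]
  · show eta hsig U G x = FTerm.subst (eta hsig U G) (θ x)
    rw [eta_eq_substPt hsig U G x hx]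
    refine (FTerm.subst_congr _ fun v hv => ?_).symm
    have hvr : v ∈ rngS θ := Set.mem_biUnion hx hv
    have hvU : v ∈ U := hθU (Or.inr hvr)
    have hvd : v ∉ domS θ := fun hd =>
      Set.eq_empty_iff_forall_notMem.mp hidem v ⟨hd, hvr⟩
    exact eta_eq_Pt hsig U G v hvU hvd

theorem unifier_edge (hθU : varsS θ ⊆ ↑U) (hidem : Idem θ)
    (τ : ℕ → FTerm Sig ar) (hτ : Unifies τ (EqSet (delta hsig U G) ∪ EqSet θ))
    (e : G.E) : τ (zvar U G (G.src e)) = τ (zvar U G (G.tgt e)) := by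
  have hδ : ∀ x ∈ U, τ x = FTerm.subst τ (delta hsig U G x) := fun x hx =>
    hτ (FTerm.var x, delta hsig U G x)
      (Or.inl ⟨x, by rw [domS_delta hsig U G hθU]; exact hx, rfl⟩)
  have hu : G.layer e ∈ domS θ := G.layer_mem e
  have huU : G.layer e ∈ U := hθU (Or.inl hu)
  have h2 : FTerm.subst τ (delta hsig U G (G.layer e)) = FTerm.subst τ (θ (G.layer e)) :=
    (hδ _ huU).symm.trans (hτ (FTerm.var (G.layer e), θ (G.layer e)) (Or.inr ⟨_, hu, rfl⟩))
  have h3 : FTerm.subst τ (θ (G.layer e))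
      = FTerm.subst (fun v => FTerm.subst τ (delta hsig U G v)) (θ (G.layer e)) :=
    FTerm.subst_congr _ (fun v hv => hδ v (hθU (Or.inr (Set.mem_biUnion hu hv))))
  have h4 : FTerm.subst τ (FTerm.repl (θ (G.layer e))
        (fun o => FTerm.mk hsig (G.res (FTerm.varAt (θ (G.layer e)) o))
          (fun i => FTerm.var (zvar U G (G.src ((phi G (G.layer e) hu ⟨o, i⟩).1))))))
      = FTerm.subst (fun v => FTerm.subst τ (delta hsig U G v)) (θ (G.layer e)) := by
    rw [← h3, ← h2]
    congr 1
    unfold delta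
    rw [dif_pos hu]
  rw [FTerm.subst_repl, FTerm.subst_eq_repl] at h4
  have h5 := FTerm.repl_injective _ _ _ h4
  have key : ∀ s : Slots G (θ (G.layer e)),
      τ (zvar U G (G.src ((phi G (G.layer e) hu s).1)))
        = τ (zvar U G (G.tgt ((phi G (G.layer e) hu s).1))) := by
    rintro ⟨o, i⟩
    have h6 := h5 o
    have hvocc : FTerm.occ (FTerm.varAt (θ (G.layer e)) o) (θ (G.layer e)) ≠ 0 :=
      FTerm.occ_varAt_ne_zero _ o
    have hvr : FTerm.varAt (θ (G.layer e)) o ∈ rngS θ := Set.mem_biUnion hu hvocc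
    have hvU : FTerm.varAt (θ (G.layer e)) o ∈ U := hθU (Or.inr hvr)
    have hvd : FTerm.varAt (θ (G.layer e)) o ∉ domS θ := fun hd =>
      Set.eq_empty_iff_forall_notMem.mp hidem _ ⟨hd, hvr⟩
    rw [FTerm.subst_mk] at h6
    have h7 : FTerm.subst τ (delta hsig U G (FTerm.varAt (θ (G.layer e)) o))
        = FTerm.mk hsig (G.res (FTerm.varAt (θ (G.layer e)) o))
            (fun i => FTerm.subst τ
              (FTerm.var (zvar U G (listing G (FTerm.varAt (θ (G.layer e)) o) i)))) := by
      unfold delta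
      rw [dif_neg hvd, if_pos hvU, FTerm.subst_mk]
    rw [h7] at h6
    have h8 := FTerm.mk_inj hsig h6 i
    have h9 : listing G (FTerm.varAt (θ (G.layer e)) o) i
        = G.tgt ((phi G (G.layer e) hu ⟨o, i⟩).1) := (phi_tgt G _ hu ⟨o, i⟩).symm
    rw [h9] at h8
    exact h8
  have := key ((phi G (G.layer e) hu).symm ⟨e, rfl⟩)
  rwa [Equiv.apply_symm_apply] at this

theorem unifier_zvar_const (hθU : varsS θ ⊆ ↑U) (hidem : Idem θ)
    (τ : ℕ → FTerm Sig ar) (hτ : Unifies τ (EqSet (delta hsig U G) ∪ EqSet θ))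
    (n : G.N) : τ (zvar U G n) = τ (wvar U G) := by
  suffices h : ∀ a b : G.N, Relation.ReflTransGen
      (fun a b => ∃ e : G.E, (G.src e = a ∧ G.tgt e = b) ∨ (G.src e = b ∧ G.tgt e = a)) a b →
      τ (zvar U G a) = τ (zvar U G b) from h _ _ (G.conn n (Classical.arbitrary G.N))
  intro a b hab
  induction hab with
  | refl => rfl
  | tail h1 h2 ih =>
      obtain ⟨e, ⟨hs, ht⟩ | ⟨hs, ht⟩⟩ := h2
      · refine ih.trans ?_
        rw [← hs, ← ht]
        exact unifier_edge hsig U G hθU hidem τ hτ e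
      · refine ih.trans ?_
        rw [← hs, ← ht]
        exact (unifier_edge hsig U G hθU hidem τ hτ e).symm

theorem unifier_factors (hθU : varsS θ ⊆ ↑U) (hidem : Idem θ)
    (τ : ℕ → FTerm Sig ar) (hτ : Unifies τ (EqSet (delta hsig U G) ∪ EqSet θ))
    (x : ℕ) : τ x = FTerm.subst τ (eta hsig U G x) := by
  have hz := unifier_zvar_const hsig U G hθU hidem τ hτ
  unfold eta
  rw [FTerm.subst_subst]
  have hcongr : FTerm.subst (fun v => FTerm.subst τ (zeta U G v)) (delta hsig U G x)
      = FTerm.subst τ (delta hsig U G x) := by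
    refine FTerm.subst_congr _ fun v _ => ?_
    by_cases hv : ∃ n, v = zvar U G n
    · obtain ⟨n, rfl⟩ := hv
      rw [zeta_zvar]
      exact (hz n).symm
    · push_neg at hv
      rw [zeta_other U G v hv]
      rfl
  rw [hcongr]
  by_cases hx : x ∈ U
  · exact hτ (FTerm.var x, delta hsig U G x)
      (Or.inl ⟨x, by rw [domS_delta hsig U G hθU]; exact hx, rfl⟩)
  · rw [delta_of_not_mem hsig U G x hx hθU]
    rfl

end Graph4

/-- Theorem 2 of the paper: optimality of parallel abstract
unification when all the variables of `θ` are variables of interest.  The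
signature is assumed to contain a function symbol of each arity (as needed for
the construction in the paper).  For every `B ∈ mgu_p(S,θ)` there is a concrete
idempotent substitution `δ`, approximated by `S`, whose (idempotent) mgu `η`
with `θ` produces exactly the sharing group `B`. -/
theorem mguP_optimal_of_vars_subset (Sig : Type) (ar : Sig → ℕ)
    (hsig : ∀ k : ℕ, ∃ f : Sig, ar f = k)
    (U : Finset ℕ) (S : Set (ℕ →₀ ℕ))
    (hS0 : (0 : ℕ →₀ ℕ) ∈ S)
    (hSU : ∀ B ∈ S, ∀ v ∈ (B : ℕ →₀ ℕ).support, v ∈ U)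
    (θ : ℕ → FTerm Sig ar) (hfin : (domS θ).Finite) (hidem : Idem θ)
    (hθU : varsS θ ⊆ ↑U)
    (B : ℕ →₀ ℕ) (hB : B ∈ mguP S θ) :
    ∃ δ : ℕ → FTerm Sig ar,
      (domS δ).Finite ∧ Idem δ ∧
      varsS δ ∩ varsS θ ⊆ ↑U ∧
      rngS δ ∩ ↑U = ∅ ∧
      (∀ v : ℕ, restr U (invSub δ v) ∈ S) ∧
      ∃ η : ℕ → FTerm Sig ar,
        (domS η).Finite ∧ Idem η ∧
        IsMGU η (EqSet δ ∪ EqSet θ) ∧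
        ∃ w : ℕ, restr U (invSub η w) = B := by

  classical
  obtain ⟨G, rfl⟩ := hB
  have hlabU : ∀ n : G.N, ∀ x, x ∉ U → G.label n x = 0 := by
    intro n x hx
    by_contra hc
    exact hx (hSU _ (G.label_mem n) x (Finsupp.mem_support_iff.mpr hc))
  have hresU : ∀ x, x ∉ U → G.res x = 0 := by
    intro x hx
    rw [res_apply]
    exact Finset.sum_eq_zero fun n _ => hlabU n x hx
  refine ⟨delta hsig U G, ?_, ?_, ?_, ?_, ?_, eta hsig U G, ?_, ?_, ?_, wvar U G, ?_⟩
  · rw [domS_delta hsig U G hθU]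
    exact U.finite_toSet
  · rw [Idem, Set.eq_empty_iff_forall_notMem]
    rintro v ⟨hd, hr⟩
    obtain ⟨n, rfl⟩ := mem_rng_delta hsig U G hθU v hr
    rw [domS_delta hsig U G hθU] at hd
    exact zvar_not_mem U G n hd
  · intro v hv
    exact hθU hv.2
  · rw [Set.eq_empty_iff_forall_notMem]
    rintro v ⟨hr, hU⟩
    obtain ⟨n, rfl⟩ := mem_rng_delta hsig U G hθU v hr
    exact zvar_not_mem U G n hU
  · intro v
    by_cases hv : ∃ n, v = zvar U G n
    · obtain ⟨n, rfl⟩ := hv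
      have heq : restr U (invSub (delta hsig U G) (zvar U G n)) = G.label n := by
        ext x
        rw [restr, Finsupp.onFinset_apply]
        by_cases hx : x ∈ U
        · rw [if_pos hx]
          exact occ_delta_zvar hsig U G x hx n
        · rw [if_neg hx]
          exact (hlabU n x hx).symm
      rw [heq]
      exact G.label_mem n
    · push_neg at hv
      have heq : restr U (invSub (delta hsig U G) v) = 0 := by
        ext x
        rw [restr, Finsupp.onFinset_apply, Finsupp.coe_zero, Pi.zero_apply]
        by_cases hx : x ∈ U
        · rw [if_pos hx]
          exact occ_delta_other hsig U G x hx v hv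
        · rw [if_neg hx]
      rw [heq]
      exact hS0
  · refine Set.Finite.subset (U.finite_toSet.union (Set.finite_range (zvar U G))) ?_
    intro x hx
    by_contra hc
    rw [Set.mem_union] at hc
    push_neg at hc
    obtain ⟨h1, h2⟩ := hc
    apply hx
    show eta hsig U G x = FTerm.var x
    rw [eta_of_not_mem hsig U G x h1 hθU]
    exact zeta_other U G x (fun n h => h2 (by rw [h]; exact Set.mem_range_self n))
  · rw [Idem, Set.eq_empty_iff_forall_notMem]
    rintro v ⟨hd, hr⟩
    have hv : v = wvar U G := by
      obtain ⟨s, ⟨x, rfl⟩, hs⟩ := hr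
      obtain ⟨s', ⟨hx, rfl⟩, hocc⟩ := hs
      by_cases hxU : x ∈ U
      · have hocc' : FTerm.occ v (FTerm.subst (zeta U G) (delta hsig U G x)) ≠ 0 := hocc
        rw [FTerm.occ_subst] at hocc'
        obtain ⟨o, -, ho⟩ := Finset.exists_ne_zero_of_sum_ne_zero hocc'
        have hy := FTerm.occ_varAt_ne_zero (delta hsig U G x) o
        have hz : ∃ n, FTerm.varAt (delta hsig U G x) o = zvar U G n := by
          by_contra hc
          push_neg at hc
          exact hy (occ_delta_other hsig U G x hxU _ hc)
        obtain ⟨n, hn⟩ := hz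
        rw [hn, zeta_zvar, FTerm.occ_var] at ho
        by_cases hw : wvar U G = v
        · exact hw.symm
        · rw [if_neg hw] at ho
          exact absurd rfl ho
      · have hx' : eta hsig U G x ≠ FTerm.var x := hx
        have hocc' : FTerm.occ v (eta hsig U G x) ≠ 0 := hocc
        rw [eta_of_not_mem hsig U G x hxU hθU] at hx' hocc'
        by_cases hxz : ∃ n, x = zvar U G n
        · rw [zeta, if_pos hxz, FTerm.occ_var] at hocc'
          by_cases hw : wvar U G = v
          · exact hw.symm
          · rw [if_neg hw] at hocc'
            exact absurd rfl hocc'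
        · push_neg at hxz
          rw [zeta_other U G x hxz] at hx'
          exact absurd rfl hx'
    subst hv
    apply hd
    show eta hsig U G (wvar U G) = FTerm.var (wvar U G)
    rw [eta_of_not_mem hsig U G _ (wvar_not_mem U G) hθU, zeta]
    split <;> rfl
  · exact ⟨eta_unifies hsig U G hθU hidem,
      fun τ hτ => ⟨τ, fun x => unifier_factors hsig U G hθU hidem τ hτ x⟩⟩
  · ext x
    rw [restr, Finsupp.onFinset_apply]
    by_cases hx : x ∈ U
    · rw [if_pos hx]
      exact occ_wvar_eta hsig U G x hx
    · rw [if_neg hx]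
      exact (hresU x hx).symm
end
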